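/- For integer ℓ ≥ 1 define k_ℓ(s) = Σ_{j=0}^∞ s^{2j+1}/((2(j+ℓ))!!(2j+1)!!). Then k_ℓ(s) = (e^s / (2 s^ℓ)) (1 − ℓ(ℓ−1)/(2s) + (ℓ−2)(ℓ−1)ℓ(ℓ+1)/(8s²) + O(1/s³)) as s → ∞. -/

import Mathlib

noncomputable section
open intervalIntegral Real

lemma expAnti {s : ℝ} (hs : s ≠ 0) (x : ℝ) :
    HasDerivAt (fun w => -Real.exp (-(s*w)) / s) (Real.exp (-(s*x))) x := by
  have h1 : HasDerivAt (fun w : ℝ => -(s*w)) (-s) x := by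
    simpa using (hasDerivAt_id x).const_mul (-s)
  have := (h1.exp.neg).div_const s
  refine this.congr_deriv ?_
  field_simp

def Ik (k : ℕ) (s : ℝ) : ℝ := ∫ w in (0:ℝ)..1, w ^ k * Real.exp (-(s*w))

lemma Ik_zero {s : ℝ} (hs : 0 < s) : Ik 0 s = (1 - Real.exp (-s)) / s := by
  have := intervalIntegral.integral_eq_sub_of_hasDerivAt (a := (0:ℝ)) (b := 1)
    (fun x _ => expAnti hs.ne' x) (by apply Continuous.intervalIntegrable; continuity)
  simp only [Ik, pow_zero, one_mul]
  rw [this, mul_one, mul_zero, neg_zero, Real.exp_zero]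
  field_simp
  ring

lemma Ik_succ (k : ℕ) {s : ℝ} (hs : 0 < s) :
    Ik (k+1) s = -Real.exp (-s)/s + ((k+1)/s) * Ik k s := by
  have hu : ∀ x ∈ Set.uIcc (0:ℝ) 1, HasDerivAt (fun w : ℝ => w ^ (k+1)) ((k+1) * x ^ k) x := by
    intro x _; simpa using (hasDerivAt_pow (k+1) x)
  have key := intervalIntegral.integral_mul_deriv_eq_deriv_mul hu
    (fun x _ => expAnti hs.ne' x)
    (by apply Continuous.intervalIntegrable; continuity)
    (by apply Continuous.intervalIntegrable; continuity)
  have heq : (fun x : ℝ => ((k:ℝ)+1) * x ^ k * (-Real.exp (-(s*x))/s))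
      = fun x : ℝ => -((((k:ℝ)+1)/s) * (x ^ k * Real.exp (-(s*x)))) := by
    funext x; field_simp
  simp only [Ik]
  rw [key, heq, intervalIntegral.integral_neg, intervalIntegral.integral_const_mul]
  simp only [Ik, one_pow, mul_one, mul_zero, neg_zero, zero_pow (Nat.succ_ne_zero k)]
  ring

lemma Ik_err (k : ℕ) {s : ℝ} (hs : 1 ≤ s) :
    0 ≤ (k.factorial : ℝ)/s^(k+1) - Ik k s ∧
    (k.factorial : ℝ)/s^(k+1) - Ik k s ≤ (k+1).factorial * Real.exp (-s) := by
  have hs0 : 0 < s := lt_of_lt_of_le one_pos hs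
  induction k with
  | zero =>
    rw [Ik_zero hs0]
    have h1 : (Nat.factorial 0 : ℝ)/s^(0+1) - (1 - Real.exp (-s))/s = Real.exp (-s)/s := by
      simp [Nat.factorial]; field_simp; ring
    rw [h1]
    constructor
    · positivity
    · rw [div_le_iff₀ hs0]
      have : ((0+1).factorial : ℝ) = 1 := by norm_num
      rw [this]; nlinarith [Real.exp_pos (-s)]
  | succ k ih =>
    rw [Ik_succ k hs0]
    have key : (((k+1).factorial : ℝ))/s^(k+2) - (-Real.exp (-s)/s + ((k+1)/s) * Ik k s)
        = Real.exp (-s)/s + ((k+1)/s) * ((k.factorial : ℝ)/s^(k+1) - Ik k s) := by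
      have : ((k+1).factorial : ℝ) = (k+1) * k.factorial := by
        push_cast [Nat.factorial_succ]; ring
      rw [this]
      field_simp
      ring
    rw [show k + 1 + 1 = k + 2 from rfl, key]
    have hfrac : (0:ℝ) ≤ (k+1)/s := by positivity
    constructor
    · have := ih.1; positivity
    · have h2 : ((k:ℝ)+1)/s ≤ (k:ℝ)+1 := by
        rw [div_le_iff₀ hs0]; nlinarith [Nat.cast_nonneg (α := ℝ) k]
      have h3 : ((k+1)/s) * ((k.factorial : ℝ)/s^(k+1) - Ik k s)
          ≤ ((k:ℝ)+1) * ((k+1).factorial * Real.exp (-s)) := by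
        calc ((k+1)/s) * ((k.factorial : ℝ)/s^(k+1) - Ik k s)
            ≤ ((k+1)/s) * ((k+1).factorial * Real.exp (-s)) := by
              exact mul_le_mul_of_nonneg_left ih.2 hfrac
          _ ≤ ((k:ℝ)+1) * ((k+1).factorial * Real.exp (-s)) := by
              apply mul_le_mul_of_nonneg_right h2; positivity
      have h4 : Real.exp (-s)/s ≤ Real.exp (-s) := by
        rw [div_le_iff₀ hs0]; nlinarith [Real.exp_pos (-s)]
      have h5 : ((k+2).factorial : ℝ) = ((k:ℝ)+2) * (k+1).factorial := by
        push_cast [Nat.factorial_succ]; ring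
      rw [h5]
      have hfk : (1:ℝ) ≤ ((k+1).factorial : ℝ) := by
        exact_mod_cast Nat.one_le_iff_ne_zero.mpr (Nat.factorial_ne_zero _)
      nlinarith [Real.exp_pos (-s), mul_le_mul_of_nonneg_right hfk (le_of_lt (Real.exp_pos (-s)))]

lemma oneSubSqAnti (ℓ : ℕ) (x : ℝ) :
    HasDerivAt (fun u : ℝ => -(1-u^2)^(ℓ+1) / (2*(ℓ+1)))
      (x * (1-x^2)^ℓ) x := by
  have h1 : HasDerivAt (fun u : ℝ => 1-u^2) (-(2*x)) x := by
    simpa using ((hasDerivAt_pow 2 x).const_sub 1)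
  have h2 := ((h1.pow (ℓ+1)).neg).div_const (2*((ℓ:ℝ)+1))
  refine h2.congr_deriv ?_
  have : ((ℓ:ℝ)+1) ≠ 0 := by positivity
  rw [Nat.add_sub_cancel]; push_cast
  field_simp

lemma betaJ : ∀ (j ℓ : ℕ), (∫ u in (0:ℝ)..1, u^(2*j+1) * (1-u^2)^ℓ)
    = (j.factorial : ℝ) * ℓ.factorial / (2 * (j+ℓ+1).factorial) := by
  intro j
  induction j with
  | zero =>
    intro ℓ
    have key := intervalIntegral.integral_eq_sub_of_hasDerivAt (a := (0:ℝ)) (b := 1)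
      (fun x _ => oneSubSqAnti ℓ x) (by apply Continuous.intervalIntegrable; continuity)
    have hL : (∫ u in (0:ℝ)..1, u^(2*0+1) * (1-u^2)^ℓ) = ∫ u in (0:ℝ)..1, u * (1-u^2)^ℓ := by
      congr 1; funext u; ring_nf
    rw [hL, key]
    have h2 : ((1:ℝ)-1^2) = 0 := by norm_num
    have h3 : ((1:ℝ)-0^2) = 1 := by norm_num
    rw [h2, h3, zero_pow (Nat.succ_ne_zero ℓ), one_pow]
    have hfl : ((0+ℓ+1).factorial : ℝ) = ((ℓ:ℝ)+1) * ℓ.factorial := by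
      rw [Nat.zero_add, Nat.factorial_succ]; push_cast; ring
    rw [hfl]
    have h4 : ((ℓ:ℝ)+1) ≠ 0 := by positivity
    have h5 : (ℓ.factorial : ℝ) ≠ 0 := by exact_mod_cast Nat.factorial_ne_zero _
    simp [Nat.factorial]
    field_simp
  | succ j ih =>
    intro ℓ
    have hu : ∀ x ∈ Set.uIcc (0:ℝ) 1, HasDerivAt (fun u : ℝ => u ^ (2*j+2))
        ((2*j+2) * x ^ (2*j+1)) x := by
      intro x _
      have := hasDerivAt_pow (2*j+2) x
      refine this.congr_deriv ?_; push_cast; ring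
    have key := intervalIntegral.integral_mul_deriv_eq_deriv_mul hu
      (fun x _ => oneSubSqAnti ℓ x)
      (by apply Continuous.intervalIntegrable; continuity)
      (by apply Continuous.intervalIntegrable; continuity)
    have hL : (∫ u in (0:ℝ)..1, u^(2*(j+1)+1) * (1-u^2)^ℓ)
        = ∫ x in (0:ℝ)..1, x ^ (2*j+2) * (x * (1-x^2)^ℓ) := by
      congr 1; funext x; ring_nf
    have heq : (fun x : ℝ => (2*(j:ℝ)+2) * x ^ (2*j+1) * (-(1-x^2)^(ℓ+1) / (2*(ℓ+1))))
        = fun x : ℝ => -(((2*(j:ℝ)+2)/(2*(ℓ+1))) * (x ^ (2*j+1) * (1-x^2)^(ℓ+1))) := by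
      funext x
      have : ((ℓ:ℝ)+1) ≠ 0 := by positivity
      field_simp
    rw [hL, key, heq, intervalIntegral.integral_neg, intervalIntegral.integral_const_mul, ih (ℓ+1)]
    have h2 : ((1:ℝ)-1^2) = 0 := by norm_num
    rw [h2, zero_pow (Nat.succ_ne_zero ℓ)]
    rw [show (0:ℝ)^(2*j+2) = 0 from zero_pow (by omega)]
    have hidx : j+(ℓ+1)+1 = (j+1)+ℓ+1 := by omega
    rw [hidx]
    have hfs : ((j+1).factorial : ℝ) = ((j:ℝ)+1) * j.factorial := by
      push_cast [Nat.factorial_succ]; ring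
    have hfl2 : ((ℓ+1).factorial : ℝ) = ((ℓ:ℝ)+1) * ℓ.factorial := by
      push_cast [Nat.factorial_succ]; ring
    rw [hfs, hfl2]
    have h3 : ((ℓ:ℝ)+1) ≠ 0 := by positivity
    have h4 : (((j+1)+ℓ+1).factorial : ℝ) ≠ 0 := by exact_mod_cast Nat.factorial_ne_zero _
    field_simp
    ring

/-- `k_ℓ(s) = Σ_{j=0}^∞ s^{2j+1} / ((2(j+ℓ))!! (2j+1)!!)`. -/
def kEven (ℓ : ℕ) (s : ℝ) : ℝ :=
  ∑' j : ℕ, s ^ (2 * j + 1) /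
    (((2 * (j + ℓ)).doubleFactorial : ℝ) * ((2 * j + 1).doubleFactorial : ℝ))

lemma summable_sinh_aux (s : ℝ) : Summable (fun j : ℕ => s ^ (2*j+1) / (2*j+1).factorial) := by
  exact (Real.hasSum_sinh s).summable

lemma term_eq (m j : ℕ) (s : ℝ) :
    s ^ (2 * j + 1) / (((2 * (j + (m+1))).doubleFactorial : ℝ) * ((2 * j + 1).doubleFactorial : ℝ))
    = (1 / (2^m * (m.factorial : ℝ))) *
      (s^(2*j+1)/((2*j+1).factorial : ℝ) * ((j.factorial : ℝ) * (m.factorial : ℝ) / (2 * ((j+m+1).factorial : ℝ)))) := by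
  have hd1 : ((2 * (j + (m+1))).doubleFactorial : ℝ) = 2^(j+m+1) * ((j+m+1).factorial : ℝ) := by
    rw [show 2*(j+(m+1)) = 2*(j+m+1) from by ring, Nat.doubleFactorial_two_mul]
    push_cast; ring
  have hd2 : ((2*j+1).doubleFactorial : ℝ) * ((2*j).doubleFactorial : ℝ) = ((2*j+1).factorial : ℝ) := by
    rw [← Nat.cast_mul, ← Nat.factorial_eq_mul_doubleFactorial]
  have hd3 : ((2*j).doubleFactorial : ℝ) = 2^j * (j.factorial : ℝ) := by
    rw [Nat.doubleFactorial_two_mul]; push_cast; ring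
  have h2j : ((2*j).doubleFactorial : ℝ) ≠ 0 := by
    exact_mod_cast Nat.doubleFactorial_pos _ |>.ne'
  have hne1 : ((2*j+1).factorial : ℝ) ≠ 0 := by exact_mod_cast Nat.factorial_ne_zero _
  have hne2 : ((j+m+1).factorial : ℝ) ≠ 0 := by exact_mod_cast Nat.factorial_ne_zero _
  have hne3 : (m.factorial : ℝ) ≠ 0 := by exact_mod_cast Nat.factorial_ne_zero _
  have hne4 : ((2*j+1).doubleFactorial : ℝ) ≠ 0 := by
    exact_mod_cast Nat.doubleFactorial_pos _ |>.ne'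
  rw [hd1]
  rw [show ((2*j+1).doubleFactorial : ℝ) = ((2*j+1).factorial : ℝ) / (2^j * (j.factorial : ℝ)) from by
    rw [← hd3, ← hd2]; field_simp]
  field_simp
  ring

lemma kEven_rep (m : ℕ) {s : ℝ} (hs : 0 < s) :
    kEven (m+1) s = (1/(2^m * (m.factorial:ℝ))) *
      ∫ u in (0:ℝ)..1, (1-u^2)^m * Real.sinh (s*u) := by
  classical
  set F : ℕ → ℝ → ℝ := fun j u => (1-u^2)^m * ((s*u)^(2*j+1)/((2*j+1).factorial : ℝ)) with hF
  have hcont : ∀ j, Continuous (F j) := fun j => by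
    simp only [hF]; continuity
  have hbound : ∀ j, ∀ u ∈ Set.Ioc (0:ℝ) 1, ‖F j u‖ ≤ s^(2*j+1)/((2*j+1).factorial : ℝ) := by
    intro j u hu
    obtain ⟨hu0, hu1⟩ := hu
    have h1 : (0:ℝ) ≤ 1 - u^2 := by nlinarith
    have h2 : (1-u^2)^m ≤ 1 := by apply pow_le_one₀ h1; nlinarith
    have h4 : (s*u)^(2*j+1) ≤ s^(2*j+1) := by
      apply pow_le_pow_left₀ (by positivity); nlinarith
    rw [Real.norm_eq_abs, abs_of_nonneg (by positivity)]
    calc (1-u^2)^m * ((s*u)^(2*j+1)/((2*j+1).factorial : ℝ))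
        ≤ 1 * ((s*u)^(2*j+1)/((2*j+1).factorial : ℝ)) := by
          apply mul_le_mul_of_nonneg_right h2; positivity
      _ = (s*u)^(2*j+1)/((2*j+1).factorial : ℝ) := one_mul _
      _ ≤ s^(2*j+1)/((2*j+1).factorial : ℝ) := by gcongr
  have hint : ∀ j, MeasureTheory.Integrable (F j)
      (MeasureTheory.volume.restrict (Set.Ioc (0:ℝ) 1)) := by
    intro j
    exact (hcont j).integrableOn_Ioc
  have hnorm_int : ∀ j, (∫ u in Set.Ioc (0:ℝ) 1, ‖F j u‖) ≤ s^(2*j+1)/((2*j+1).factorial : ℝ) := by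
    intro j
    have key := MeasureTheory.norm_setIntegral_le_of_norm_le_const
      (μ := MeasureTheory.volume) (s := Set.Ioc (0:ℝ) 1)
      (f := fun u => ‖F j u‖) (C := s^(2*j+1)/((2*j+1).factorial : ℝ))
      (by simp)
      (fun u hu => by rw [norm_norm]; exact hbound j u hu)
    simp only [Real.volume_real_Ioc, max_eq_left zero_le_one, sub_zero, ENNReal.toReal_ofReal zero_le_one, mul_one] at key
    exact (le_abs_self _).trans key
  have hsummable : Summable (fun j => ∫ u in Set.Ioc (0:ℝ) 1, ‖F j u‖) := by
    apply Summable.of_nonneg_of_le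
      (fun j => MeasureTheory.integral_nonneg (fun u => norm_nonneg _)) hnorm_int
    exact summable_sinh_aux s
  have hswap := MeasureTheory.integral_tsum_of_summable_integral_norm
    (μ := MeasureTheory.volume.restrict (Set.Ioc (0:ℝ) 1)) hint hsummable
  have htsumF : ∀ u : ℝ, (∑' j, F j u) = (1-u^2)^m * Real.sinh (s*u) := by
    intro u
    exact ((Real.hasSum_sinh (s*u)).mul_left ((1-u^2)^m)).tsum_eq
  have hIoc : (∫ u in (0:ℝ)..1, (1-u^2)^m * Real.sinh (s*u))
      = ∫ u in Set.Ioc (0:ℝ) 1, (1-u^2)^m * Real.sinh (s*u) := by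
    rw [intervalIntegral.integral_of_le zero_le_one]
  have hFj : ∀ j, (∫ u in Set.Ioc (0:ℝ) 1, F j u)
      = s^(2*j+1)/((2*j+1).factorial : ℝ) * ((j.factorial : ℝ) * (m.factorial : ℝ) / (2 * ((j+m+1).factorial : ℝ))) := by
    intro j
    have h1 : (∫ u in Set.Ioc (0:ℝ) 1, F j u) = ∫ u in (0:ℝ)..1, F j u := by
      rw [intervalIntegral.integral_of_le zero_le_one]
    rw [h1]
    have h2 : (∫ u in (0:ℝ)..1, F j u)
        = s^(2*j+1)/((2*j+1).factorial : ℝ) * ∫ u in (0:ℝ)..1, u^(2*j+1) * (1-u^2)^m := by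
      rw [← intervalIntegral.integral_const_mul]
      congr 1; funext u; simp only [hF]
      rw [mul_pow]
      ring
    rw [h2, betaJ j m]
  have hk : kEven (m+1) s = ∑' j, (1/(2^m * (m.factorial:ℝ))) * (∫ u in Set.Ioc (0:ℝ) 1, F j u) := by
    rw [kEven]
    congr 1; funext j
    rw [hFj j, term_eq m j s]
  rw [hk, tsum_mul_left, hswap, hIoc]
  congr 1
  apply MeasureTheory.integral_congr_ae
  filter_upwards with u
  exact htsumF u

lemma shift_int (k : ℕ) (s : ℝ) :
    (∫ u in (0:ℝ)..1, (1-u)^k * Real.exp (s*u)) = Real.exp s * Ik k s := by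
  have h1 : (∫ u in (0:ℝ)..1, (1-u)^k * Real.exp (s*u))
      = ∫ u in (0:ℝ)..1, (fun w => w^k * Real.exp (s*(1-w))) (1-u) := by
    congr 1; funext u; simp only []; ring_nf
  rw [h1, intervalIntegral.integral_comp_sub_left (fun w => w^k * Real.exp (s*(1-w))) 1]
  norm_num
  rw [Ik, ← intervalIntegral.integral_const_mul]
  congr 1; funext w
  rw [show s*(1-w) = s + -(s*w) from by ring, Real.exp_add]
  ring

lemma pt_expand (m : ℕ) (u : ℝ) :
    (1-u^2)^m = ∑ i ∈ Finset.range (m+1),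
      ((m.choose i : ℝ) * 2^(m-i) * (-1)^i) * (1-u)^(m+i) := by
  have h0 : (1-u^2) = (1-u)*(1+u) := by ring
  have h1 : ((1:ℝ)+u) = (-(1-u)) + 2 := by ring
  rw [h0, mul_pow, h1, add_pow]
  rw [Finset.mul_sum]
  apply Finset.sum_congr rfl
  intro i hi
  rw [neg_pow]
  ring

lemma A_expand (m : ℕ) (s : ℝ) :
    (∫ u in (0:ℝ)..1, (1-u^2)^m * Real.exp (s*u))
    = ∑ i ∈ Finset.range (m+1),
        ((m.choose i : ℝ) * 2^(m-i) * (-1)^i) * (Real.exp s * Ik (m+i) s) := by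
  have h1 : (∫ u in (0:ℝ)..1, (1-u^2)^m * Real.exp (s*u))
      = ∫ u in (0:ℝ)..1, ∑ i ∈ Finset.range (m+1),
          ((m.choose i : ℝ) * 2^(m-i) * (-1)^i) * ((1-u)^(m+i) * Real.exp (s*u)) := by
    congr 1; funext u
    rw [pt_expand m u, Finset.sum_mul]
    apply Finset.sum_congr rfl; intro i _; ring
  rw [h1, intervalIntegral.integral_finset_sum]
  · apply Finset.sum_congr rfl
    intro i _
    rw [intervalIntegral.integral_const_mul, shift_int (m+i) s]
  · intro i _
    apply Continuous.intervalIntegrable; continuity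

lemma sinh_split (m : ℕ) (s : ℝ) :
    (∫ u in (0:ℝ)..1, (1-u^2)^m * Real.sinh (s*u))
    = (1/2) * (∫ u in (0:ℝ)..1, (1-u^2)^m * Real.exp (s*u))
      - (1/2) * (∫ u in (0:ℝ)..1, (1-u^2)^m * Real.exp (-(s*u))) := by
  rw [← intervalIntegral.integral_const_mul, ← intervalIntegral.integral_const_mul,
    ← intervalIntegral.integral_sub
      (by apply Continuous.intervalIntegrable; continuity)
      (by apply Continuous.intervalIntegrable; continuity)]
  congr 1; funext u
  rw [Real.sinh_eq]
  ring

lemma B_bound (m : ℕ) {s : ℝ} (hs : 0 < s) :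
    |∫ u in (0:ℝ)..1, (1-u^2)^m * Real.exp (-(s*u))| ≤ 1 := by
  have key := intervalIntegral.norm_integral_le_of_norm_le_const (a := (0:ℝ)) (b := 1) (C := 1)
    (f := fun u => (1-u^2)^m * Real.exp (-(s*u))) ?_
  · simpa using key
  · intro u hu
    rw [Set.uIoc_of_le zero_le_one] at hu
    obtain ⟨h0, h1⟩ := hu
    have hn : (0:ℝ) ≤ 1 - u^2 := by nlinarith
    have h2 : (1-u^2)^m ≤ 1 := by apply pow_le_one₀ hn; nlinarith
    have h3 : Real.exp (-(s*u)) ≤ 1 := by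
      rw [Real.exp_le_one_iff]; nlinarith
    rw [Real.norm_eq_abs, abs_of_nonneg (by positivity)]
    calc (1-u^2)^m * Real.exp (-(s*u)) ≤ 1 * 1 := by
          apply mul_le_mul h2 h3 (by positivity) (by norm_num)
      _ = 1 := by norm_num

def dCoef (m i : ℕ) : ℝ := (m.choose i : ℝ) * 2^(m-i) * (-1)^i

lemma dCoef_zero (m : ℕ) : dCoef m 0 = 2^m := by simp [dCoef]

lemma dCoef_one (m : ℕ) : dCoef m 1 = -((m:ℝ) * 2^m / 2) := by
  cases m with
  | zero => simp [dCoef]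
  | succ n =>
    simp only [dCoef, Nat.choose_one_right, Nat.succ_sub_one, pow_one]
    push_cast
    rw [pow_succ]
    ring

lemma dCoef_two (m : ℕ) : dCoef m 2 = (m:ℝ) * ((m:ℝ)-1) / 2 * 2^m / 4 := by
  match m with
  | 0 => simp [dCoef]
  | 1 => norm_num [dCoef]
  | (n+2) =>
    simp only [dCoef]
    rw [Nat.cast_choose_two, show n+2-2 = n from rfl]
    push_cast
    rw [show n+2 = n+1+1 from rfl, pow_succ, pow_succ]
    ring

lemma main_id (m : ℕ) {s : ℝ} (hs : 0 < s) :
    (1/(2^m * (m.factorial:ℝ))) * (1/2) *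
      (∑ i ∈ Finset.range 3, dCoef m i * (Real.exp s * (((m+i).factorial : ℝ)/s^(m+i+1))))
    = Real.exp s / (2 * s^(m+1)) *
        (1 - ((m:ℝ)+1) * (((m:ℝ)+1) - 1) / (2*s)
          + (((m:ℝ)+1) - 2) * (((m:ℝ)+1) - 1) * ((m:ℝ)+1) * (((m:ℝ)+1) + 1) / (8*s^2)) := by
  rw [Finset.sum_range_succ, Finset.sum_range_succ, Finset.sum_range_one,
    dCoef_zero, dCoef_one, dCoef_two]
  have hf1 : ((m+1).factorial : ℝ) = ((m:ℝ)+1) * m.factorial := by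
    push_cast [Nat.factorial_succ]; ring
  have hf2 : ((m+2).factorial : ℝ) = ((m:ℝ)+2) * (((m:ℝ)+1) * m.factorial) := by
    rw [show m+2 = (m+1)+1 from rfl]
    push_cast [Nat.factorial_succ]; ring
  rw [show m+0 = m from rfl, hf1, hf2]
  have hm : (m.factorial : ℝ) ≠ 0 := by exact_mod_cast Nat.factorial_ne_zero _
  have hp1 : s^(m+0+1) = s^(m+1) := by ring_nf
  have hp2 : s^(m+1+1) = s^(m+1) * s := by ring
  have hp3 : s^(m+2+1) = s^(m+1) * s^2 := by ring
  rw [hp1, hp2, hp3]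
  have hsp : s^(m+1) ≠ 0 := by positivity
  field_simp
  ring

lemma exp_lower (n : ℕ) {s : ℝ} (hs : 0 < s) : s^n / (n.factorial : ℝ) ≤ Real.exp s := by
  have h1 := Real.sum_le_exp_of_nonneg hs.le (n+1)
  refine le_trans ?_ h1
  exact Finset.single_le_sum (f := fun i => s^i/(i.factorial : ℝ))
    (fun i _ => by positivity) (Finset.self_mem_range_succ n)

/-- For integer `ℓ ≥ 1`,
`k_ℓ(s) = (e^s/(2s^ℓ))(1 − ℓ(ℓ−1)/(2s) + (ℓ−2)(ℓ−1)ℓ(ℓ+1)/(8s²) + O(1/s³))` as `s → ∞`. -/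
theorem stmt9 (ℓ : ℕ) (hℓ : 1 ≤ ℓ) :
    ∃ C > (0:ℝ), ∃ S > (0:ℝ), ∀ s ≥ S,
      |kEven ℓ s - Real.exp s / (2 * s ^ ℓ) *
          (1 - (ℓ : ℝ) * ((ℓ : ℝ) - 1) / (2 * s)
            + ((ℓ : ℝ) - 2) * ((ℓ : ℝ) - 1) * (ℓ : ℝ) * ((ℓ : ℝ) + 1) / (8 * s ^ 2))|
      ≤ C * (Real.exp s / (2 * s ^ ℓ)) * (1 / s ^ 3) := by
  obtain ⟨m, rfl⟩ : ∃ m, ℓ = m + 1 := ⟨ℓ - 1, (Nat.succ_pred_eq_of_pos hℓ).symm⟩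
  set c : ℝ := 1/(2^m * (m.factorial:ℝ)) with hc
  have hcpos : 0 < c := by positivity
  set K : ℝ := ∑ i ∈ Finset.range (m+3), |dCoef m i| * (((m+i+1).factorial : ℝ)) with hK
  have hK0 : 0 ≤ K := Finset.sum_nonneg (fun i _ => by positivity)
  set C0 : ℝ := c/2*(K+1) with hC0def
  have hC0 : 0 < C0 := by positivity
  refine ⟨2*C0 + 2*((m+5).factorial:ℝ)*C0, by positivity, 1, one_pos, ?_⟩
  intro s hs1
  have hs0 : (0:ℝ) < s := lt_of_lt_of_le one_pos hs1
  set B : ℝ := ∫ u in (0:ℝ)..1, (1-u^2)^m * Real.exp (-(s*u)) with hB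
  -- kEven in terms of g and B
  have hkE : kEven (m+1) s = c * ((1/2) * (∑ i ∈ Finset.range (m+3),
      dCoef m i * (Real.exp s * Ik (m+i) s)) - (1/2)*B) := by
    rw [kEven_rep m hs0, sinh_split, A_expand]
    have hext : (∑ i ∈ Finset.range (m+1), dCoef m i * (Real.exp s * Ik (m+i) s))
        = ∑ i ∈ Finset.range (m+3), dCoef m i * (Real.exp s * Ik (m+i) s) := by
      apply Finset.sum_subset (Finset.range_subset_range.mpr (by omega))
      intro i _ hi
      have him : m < i := by
        simp only [Finset.mem_range, not_lt] at hi; omega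
      simp [dCoef, Nat.choose_eq_zero_of_lt him]
    rw [← hext]
    congr 1
  -- main term in terms of f
  have hMeq : Real.exp s / (2 * s ^ (m+1)) *
          (1 - ((m+1:ℕ) : ℝ) * (((m+1:ℕ) : ℝ) - 1) / (2 * s)
            + (((m+1:ℕ) : ℝ) - 2) * (((m+1:ℕ) : ℝ) - 1) * ((m+1:ℕ) : ℝ) * (((m+1:ℕ) : ℝ) + 1) / (8 * s ^ 2))
      = c * (1/2) * ∑ i ∈ Finset.range 3,
          dCoef m i * (Real.exp s * (((m+i).factorial : ℝ)/s^(m+i+1))) := by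
    have hcast : (((m+1:ℕ)):ℝ) = (m:ℝ)+1 := by push_cast; ring
    rw [hcast]
    exact (main_id m hs0).symm
  set f : ℕ → ℝ := fun i => dCoef m i * (Real.exp s * (((m+i).factorial : ℝ)/s^(m+i+1))) with hf
  set g : ℕ → ℝ := fun i => dCoef m i * (Real.exp s * Ik (m+i) s) with hg
  rw [hkE, hMeq]
  -- decompose the difference
  have hsplit : (∑ i ∈ Finset.range (m+3), f i)
      = (∑ i ∈ Finset.range 3, f i) + ∑ i ∈ Finset.Ico 3 (m+3), f i := by
    rw [Finset.range_eq_Ico]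
    exact (Finset.sum_Ico_consecutive f (show 0 ≤ 3 by omega) (show 3 ≤ m+3 by omega)).symm
  have hdiff : c * ((1/2) * (∑ i ∈ Finset.range (m+3), g i) - (1/2)*B)
        - c * (1/2) * ∑ i ∈ Finset.range 3, f i
      = c/2 * ((∑ i ∈ Finset.range (m+3), (g i - f i)) + ∑ i ∈ Finset.Ico 3 (m+3), f i)
        - c/2 * B := by
    rw [Finset.sum_sub_distrib, hsplit]
    ring
  rw [hdiff]
  -- bound each piece
  set E : ℝ := Real.exp s / s^(m+4) with hE
  have hEpos : 0 < E := by positivity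
  have hstep1 : ∀ i ∈ Finset.range (m+3), |g i - f i| ≤ |dCoef m i| * (((m+i+1).factorial : ℝ)) := by
    intro i _
    have herr := Ik_err (m+i) hs1
    have heq : g i - f i = dCoef m i * Real.exp s *
        (Ik (m+i) s - ((m+i).factorial : ℝ)/s^(m+i+1)) := by
      simp only [hf, hg]; ring
    have habs : |Ik (m+i) s - ((m+i).factorial : ℝ)/s^(m+i+1)|
        ≤ ((m+i+1).factorial : ℝ) * Real.exp (-s) := by
      rw [abs_sub_comm, abs_of_nonneg herr.1]
      exact herr.2
    calc |g i - f i| = |dCoef m i| * Real.exp s *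
          |Ik (m+i) s - ((m+i).factorial : ℝ)/s^(m+i+1)| := by
          rw [heq, abs_mul, abs_mul, abs_of_nonneg (Real.exp_pos s).le]
      _ ≤ |dCoef m i| * Real.exp s * (((m+i+1).factorial : ℝ) * Real.exp (-s)) := by
          apply mul_le_mul_of_nonneg_left habs (by positivity)
      _ = |dCoef m i| * (((m+i+1).factorial : ℝ)) := by
          rw [Real.exp_neg]
          have := (Real.exp_pos s).ne'
          field_simp
  have hsum1 : |∑ i ∈ Finset.range (m+3), (g i - f i)| ≤ K := by
    calc |∑ i ∈ Finset.range (m+3), (g i - f i)|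
        ≤ ∑ i ∈ Finset.range (m+3), |g i - f i| := Finset.abs_sum_le_sum_abs _ _
      _ ≤ K := Finset.sum_le_sum hstep1
  have hstep2 : ∀ i ∈ Finset.Ico 3 (m+3), |f i| ≤ |dCoef m i| * (((m+i+1).factorial : ℝ)) * E := by
    intro i hi
    have hi3 : 3 ≤ i := (Finset.mem_Ico.mp hi).1
    have hple : s^(m+4) ≤ s^(m+i+1) := pow_le_pow_right₀ hs1 (by omega)
    have hfle : ((m+i).factorial : ℝ)/s^(m+i+1) ≤ ((m+i+1).factorial : ℝ)/s^(m+4) := by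
      apply div_le_div₀ (by positivity) _ (by positivity) hple
      exact_mod_cast Nat.factorial_le (by omega)
    have habs2 : |Real.exp s * (((m+i).factorial : ℝ)/s^(m+i+1))|
        = Real.exp s * (((m+i).factorial : ℝ)/s^(m+i+1)) := abs_of_nonneg (by positivity)
    calc |f i| = |dCoef m i| * (Real.exp s * (((m+i).factorial : ℝ)/s^(m+i+1))) := by
          rw [hf, abs_mul, habs2]
      _ ≤ |dCoef m i| * (Real.exp s * (((m+i+1).factorial : ℝ)/s^(m+4))) := by
          apply mul_le_mul_of_nonneg_left _ (abs_nonneg _)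
          exact mul_le_mul_of_nonneg_left hfle (Real.exp_pos s).le
      _ = |dCoef m i| * (((m+i+1).factorial : ℝ)) * E := by
          rw [hE]; ring
  have hsum2 : |∑ i ∈ Finset.Ico 3 (m+3), f i| ≤ K * E := by
    calc |∑ i ∈ Finset.Ico 3 (m+3), f i|
        ≤ ∑ i ∈ Finset.Ico 3 (m+3), |f i| := Finset.abs_sum_le_sum_abs _ _
      _ ≤ ∑ i ∈ Finset.Ico 3 (m+3), |dCoef m i| * (((m+i+1).factorial : ℝ)) * E :=
          Finset.sum_le_sum hstep2
      _ = (∑ i ∈ Finset.Ico 3 (m+3), |dCoef m i| * (((m+i+1).factorial : ℝ))) * E := by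
          rw [Finset.sum_mul]
      _ ≤ K * E := by
          apply mul_le_mul_of_nonneg_right _ hEpos.le
          apply Finset.sum_le_sum_of_subset_of_nonneg
          · intro x hx
            simp only [Finset.mem_Ico] at hx
            simp only [Finset.mem_range]
            omega
          · intro i _ _; positivity
  have hBb : |B| ≤ 1 := B_bound m hs0
  -- total bound
  have htotal : |c/2 * ((∑ i ∈ Finset.range (m+3), (g i - f i)) + ∑ i ∈ Finset.Ico 3 (m+3), f i)
        - c/2 * B| ≤ C0 + C0 * E := by
    calc |c/2 * ((∑ i ∈ Finset.range (m+3), (g i - f i)) + ∑ i ∈ Finset.Ico 3 (m+3), f i)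
          - c/2 * B|
        ≤ |c/2 * ((∑ i ∈ Finset.range (m+3), (g i - f i)) + ∑ i ∈ Finset.Ico 3 (m+3), f i)|
          + |c/2 * B| := abs_sub _ _
      _ ≤ c/2 * (|∑ i ∈ Finset.range (m+3), (g i - f i)| + |∑ i ∈ Finset.Ico 3 (m+3), f i|)
          + c/2 * |B| := by
          rw [abs_mul, abs_mul, abs_of_nonneg (by positivity : (0:ℝ) ≤ c/2)]
          apply add_le_add_left
          apply mul_le_mul_of_nonneg_left (abs_add_le _ _) (by positivity)
      _ ≤ c/2 * (K + K * E) + c/2 * 1 := by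
          apply add_le_add
          · exact mul_le_mul_of_nonneg_left (add_le_add hsum1 hsum2) (by positivity)
          · exact mul_le_mul_of_nonneg_left hBb (by positivity)
      _ ≤ C0 + C0 * E := by
          rw [hC0def]
          have h1 : c/2 * K * E ≤ c/2*(K+1) * E := by
            apply mul_le_mul_of_nonneg_right _ hEpos.le
            nlinarith
          nlinarith
  refine htotal.trans ?_
  -- final comparison
  have hElow : 1 ≤ ((m+5).factorial : ℝ) * E := by
    have h1 := exp_lower (m+5) hs0
    have h3 : s / ((m+5).factorial : ℝ) ≤ E := by
      rw [hE, div_le_div_iff₀ (by positivity) (by positivity)]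
      calc s * s^(m+4) = s^(m+5) := by rw [pow_succ]; ring
        _ ≤ Real.exp s * ((m+5).factorial : ℝ) := by
            rw [div_le_iff₀ (by positivity)] at h1
            linarith
    have h4 : 1 ≤ s / ((m+5).factorial : ℝ) * ((m+5).factorial : ℝ) := by
      have : (0:ℝ) < ((m+5).factorial : ℝ) := by positivity
      rw [div_mul_cancel₀ _ this.ne']
      exact hs1
    calc (1:ℝ) ≤ s / ((m+5).factorial : ℝ) * ((m+5).factorial : ℝ) := h4
      _ ≤ E * ((m+5).factorial : ℝ) := mul_le_mul_of_nonneg_right h3 (by positivity)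
      _ = ((m+5).factorial : ℝ) * E := mul_comm _ _
  have hRHS : (2*C0 + 2*((m+5).factorial:ℝ)*C0) * (Real.exp s / (2 * s ^ (m+1))) * (1 / s ^ 3)
      = C0 * E + ((m+5).factorial:ℝ) * C0 * E := by
    rw [hE, show s^(m+4) = s^(m+1) * s^3 from by rw [← pow_add]]
    field_simp
  rw [hRHS]
  have : C0 ≤ ((m+5).factorial:ℝ) * C0 * E := by
    calc C0 = C0 * 1 := (mul_one _).symm
      _ ≤ C0 * (((m+5).factorial : ℝ) * E) := mul_le_mul_of_nonneg_left hElow hC0.le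
      _ = ((m+5).factorial:ℝ) * C0 * E := by ring
  linarith
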